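/- Let G = U(2,1)(F/F₀) inside GL_3(F) with respect to the hermitian form with matrix J = adiag(1,1,1), let T be the diagonal torus of G and N the upper-triangular unipotent subgroup {(1,x,y;0,1,\bar{x};0,0,1) : y + \bar{y} = x\bar{x}}, and let \bar{N} be the lower-triangular unipotent subgroup. Let w_y = adiag(ϖ, 1, ϖ^{-1}) for a uniformizer ϖ of F₀. Then conjugation by w_y maps N into \bar{N}-direction correctly: for any subgroup J of G admitting a unique Iwahori decomposition J = (J ∩ \bar{N})(J ∩ T)(J ∩ N), if a character λ of J (trivial on J ∩ N and J ∩ \bar{N}) is intertwined by w_x = adiag(1,1,1), then it is intertwined by w_y. (Here g intertwines λ means λ(j) = λ(g^{-1}jg) for all j ∈ J ∩ gJg^{-1}.) -/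

import Mathlib

open Matrix

/-- The 3×3 antidiagonal matrix `adiag(a,b,c)`. -/
def adiag3 {F : Type*} [Field F] (a b c : F) : Matrix (Fin 3) (Fin 3) F :=
  !![0, 0, a; 0, b, 0; c, 0, 0]

/-- The unramified unitary group `U(2,1)(F/F₀)`, realised as the set of
matrices `g` with `g ⬝ J ⬝ σ(g)ᵀ ⬝ J = 1`, where `σ` is the Galois
conjugation and `J = adiag(1,1,1)`. -/
def U21 (F : Type*) [Field F] (σ : F ≃+* F) : Set (Matrix (Fin 3) (Fin 3) F) :=
  {g | g * adiag3 (1 : F) 1 1 * (g.map σ)ᵀ * adiag3 (1 : F) 1 1 = 1}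

/-- The diagonal torus `T = {diag(x, y, σ(x)⁻¹) : x ∈ F^×, y σ(y) = 1}`. -/
def torusT (F : Type*) [Field F] (σ : F ≃+* F) : Set (Matrix (Fin 3) (Fin 3) F) :=
  {g | ∃ x y : F, x ≠ 0 ∧ y * σ y = 1 ∧ g = Matrix.diagonal ![x, y, (σ x)⁻¹]}

/-- The upper-triangular unipotent subgroup
`N = {(1,x,y; 0,1,σx; 0,0,1) : y + σ(y) = x σ(x)}`. -/
def upperN (F : Type*) [Field F] (σ : F ≃+* F) : Set (Matrix (Fin 3) (Fin 3) F) :=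
  {g | ∃ x y : F, y + σ y = x * σ x ∧ g = !![1, x, y; 0, 1, σ x; 0, 0, 1]}

/-- The lower-triangular unipotent subgroup `N̄` of `U(2,1)`. -/
def lowerN (F : Type*) [Field F] (σ : F ≃+* F) : Set (Matrix (Fin 3) (Fin 3) F) :=
  {g | g ∈ U21 F σ ∧ (∀ i, g i i = 1) ∧ ∀ i j : Fin 3, i < j → g i j = 0}

lemma ldu_uniq3 {F : Type*} [Field F] {p q r u v w p' q' r' u' v' w' t0 t1 t2 t0' t1' t2' : F}
    (h0 : t0 ≠ 0) (h1 : t1 ≠ 0)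
    (h : !![1,0,0;p,1,0;q,r,1] * !![t0,0,0;0,t1,0;0,0,t2] * !![1,u,v;0,1,w;0,0,1]
       = !![(1:F),0,0;p',1,0;q',r',1] * !![t0',0,0;0,t1',0;0,0,t2'] * !![1,u',v';0,1,w';0,0,1]) :
    t0 = t0' ∧ t1 = t1' ∧ t2 = t2' := by
  simp [Matrix.mul_fin_three] at h
  have e00 : t0 = t0' := h.1.1
  have e01 : t0 * u = t0' * u' := h.1.2.1
  have e02 : t0 * v = t0' * v' := h.1.2.2
  have e10 : p * t0 = p' * t0' := h.2.1.1
  have e11 : p * t0 * u + t1 = p' * t0' * u' + t1' := h.2.1.2.1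
  have e12 : p * t0 * v + t1 * w = p' * t0' * v' + t1' * w' := h.2.1.2.2
  have e20 : q * t0 = q' * t0' := h.2.2.1
  have e21 : q * t0 * u + r * t1 = q' * t0' * u' + r' * t1' := h.2.2.2.1
  have e22 : q * t0 * v + (r * t1 * w + t2) = q' * t0' * v' + (r' * t1' * w' + t2') :=
    h.2.2.2.2
  subst e00
  have hu : u = u' := mul_left_cancel₀ h0 e01
  have hv : v = v' := mul_left_cancel₀ h0 e02
  have hp : p = p' := mul_right_cancel₀ h0 e10
  have hq : q = q' := mul_right_cancel₀ h0 e20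
  subst hu; subst hv; subst hp; subst hq
  have ht1 : t1 = t1' := by linear_combination e11
  subst ht1
  have hw : w = w' := mul_left_cancel₀ h1 (by linear_combination e12)
  have hr : r = r' := mul_right_cancel₀ h1 (by linear_combination e21)
  subst hw; subst hr
  exact ⟨rfl, rfl, by linear_combination e22⟩

lemma diag3_eq {F : Type*} [Field F] (a b c : F) :
    Matrix.diagonal ![a,b,c] = !![a,0,0;0,b,0;0,0,c] := by
  ext i j; fin_cases i <;> fin_cases j <;> rfl

lemma lower_shape {F : Type*} [Field F] (σ : F ≃+* F) {a : Matrix (Fin 3) (Fin 3) F}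
    (ha : a ∈ lowerN F σ) : a = !![1,0,0; a 1 0, 1, 0; a 2 0, a 2 1, 1] := by
  obtain ⟨-, hd, hu⟩ := ha
  ext i j
  fin_cases i <;> fin_cases j <;>
    simp [hd 0, hd 1, hd 2, hu 0 1 (by decide), hu 0 2 (by decide), hu 1 2 (by decide)]

/-- If a character `λ` of a subgroup `J` of `U(2,1)(F/F₀)` admitting a unique
Iwahori decomposition `J = (J∩N̄)(J∩T)(J∩N)` (trivial on `J∩N` and `J∩N̄`) is
intertwined by `w_x = adiag(1,1,1)`, then it is intertwined by
`w_y = adiag(ϖ,1,ϖ⁻¹)`. -/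
theorem intertwined_wx_implies_wy
    {F k : Type*} [Field F] [Field k] (σ : F ≃+* F) (hσ : ∀ x, σ (σ x) = x)
    (ϖ : F) (hϖ : ϖ ≠ 0) (hσϖ : σ ϖ = ϖ)
    (J : Set (Matrix (Fin 3) (Fin 3) F)) (hJU : J ⊆ U21 F σ)
    (hJmul : ∀ a ∈ J, ∀ b ∈ J, a * b ∈ J)
    (lam : Matrix (Fin 3) (Fin 3) F → kˣ)
    (hmul : ∀ a ∈ J, ∀ b ∈ J, lam (a * b) = lam a * lam b)
    (htrN : ∀ n ∈ J ∩ upperN F σ, lam n = 1)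
    (htrNbar : ∀ n ∈ J ∩ lowerN F σ, lam n = 1)
    (hex : ∀ j ∈ J, ∃ a ∈ J ∩ lowerN F σ, ∃ t ∈ J ∩ torusT F σ,
        ∃ b ∈ J ∩ upperN F σ, j = a * t * b)
    (hex' : ∀ j ∈ J, ∃ b ∈ J ∩ upperN F σ, ∃ t ∈ J ∩ torusT F σ,
        ∃ a ∈ J ∩ lowerN F σ, j = b * t * a)
    (huniq : ∀ a ∈ lowerN F σ, ∀ t ∈ torusT F σ, ∀ b ∈ upperN F σ,
        ∀ a' ∈ lowerN F σ, ∀ t' ∈ torusT F σ, ∀ b' ∈ upperN F σ,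
        a * t * b = a' * t' * b' → a = a' ∧ t = t' ∧ b = b')
    (hwx : ∀ j ∈ J, adiag3 (1 : F) 1 1 * j * adiag3 (1 : F) 1 1 ∈ J →
        lam j = lam (adiag3 (1 : F) 1 1 * j * adiag3 (1 : F) 1 1)) :
    ∀ j ∈ J, adiag3 ϖ 1 ϖ⁻¹ * j * adiag3 ϖ 1 ϖ⁻¹ ∈ J →
      lam j = lam (adiag3 ϖ 1 ϖ⁻¹ * j * adiag3 ϖ 1 ϖ⁻¹) := by
  intro j hj hjP
  set P : Matrix (Fin 3) (Fin 3) F := adiag3 ϖ 1 ϖ⁻¹ with hPdef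
  -- decompose j = b * t * a
  obtain ⟨b, ⟨hbJ, hbN⟩, t, ⟨htJ, x, y, hx, hy, hteq⟩, a, ⟨haJ, haN⟩, hjdec⟩ := hex' j hj
  obtain ⟨xb, yb, hbrel, hbeq⟩ := hbN
  -- decompose P j P = a₁ * t₁ * b₁
  obtain ⟨a₁, ⟨ha₁J, ha₁N⟩, t₁, ⟨ht₁J, x₁, y₁, hx₁, hy₁, ht₁eq⟩, b₁, ⟨hb₁J, hb₁N⟩, hdec1⟩ :=
    hex _ hjP
  obtain ⟨xb₁, yb₁, hb₁rel, hb₁eq⟩ := hb₁N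
  have hPP : P * P = 1 := by
    simp [hPdef, adiag3, Matrix.mul_fin_three, Matrix.one_fin_three,
      mul_inv_cancel₀ hϖ, inv_mul_cancel₀ hϖ]
  have hcancel : ∀ X : Matrix (Fin 3) (Fin 3) F, P * (P * X) = X := by
    intro X; rw [← mul_assoc, hPP, one_mul]
  -- nonzero facts
  have hσx : (σ x)⁻¹ ≠ 0 := by
    simp only [ne_eq, inv_eq_zero]
    exact fun h => hx (by simpa using σ.injective (h.trans (map_zero σ).symm))
  have hy0 : y ≠ 0 := left_ne_zero_of_mul_eq_one hy
  have hy₁0 : y₁ ≠ 0 := left_ne_zero_of_mul_eq_one hy₁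
  -- explicit conjugates
  have hPtP : P * t * P = !![(σ x)⁻¹,0,0;0,y,0;0,0,x] := by
    rw [hteq, diag3_eq]
    have h1 : ϖ * (σ x)⁻¹ * ϖ⁻¹ = (σ x)⁻¹ := by
      rw [mul_comm ϖ (σ x)⁻¹, mul_assoc, mul_inv_cancel₀ hϖ, mul_one]
    have h2 : ϖ⁻¹ * x * ϖ = x := by field_simp
    simp [hPdef, adiag3, Matrix.mul_fin_three, h1, h2]
  have hPbP : P * b * P = !![1,0,0; σ xb * ϖ⁻¹, 1, 0; ϖ⁻¹ * yb * ϖ⁻¹, ϖ⁻¹ * xb, 1] := by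
    rw [hbeq]
    simp [hPdef, adiag3, Matrix.mul_fin_three, mul_inv_cancel₀ hϖ, inv_mul_cancel₀ hϖ]
  have hPaP : P * a * P = !![1, ϖ * a 2 1, ϖ * a 2 0 * ϖ; 0, 1, a 1 0 * ϖ; 0,0,1] := by
    conv_lhs => rw [lower_shape σ haN]
    simp [hPdef, adiag3, Matrix.mul_fin_three, mul_inv_cancel₀ hϖ, inv_mul_cancel₀ hϖ]
  have hPjP : P * j * P = (P * b * P) * (P * t * P) * (P * a * P) := by
    rw [hjdec]
    simp only [mul_assoc, hcancel]
  -- identify t₁ with the conjugated torus element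
  have hkey : x₁ = (σ x)⁻¹ ∧ y₁ = y ∧ (σ x₁)⁻¹ = x := by
    have hmat : !![(1:F),0,0; a₁ 1 0, 1, 0; a₁ 2 0, a₁ 2 1, 1]
        * !![x₁,0,0;0,y₁,0;0,0,(σ x₁)⁻¹]
        * !![1, xb₁, yb₁; 0, 1, σ xb₁; 0, 0, 1]
        = !![(1:F),0,0; σ xb * ϖ⁻¹, 1, 0; ϖ⁻¹ * yb * ϖ⁻¹, ϖ⁻¹ * xb, 1]
        * !![(σ x)⁻¹,0,0;0,y,0;0,0,x]
        * !![1, ϖ * a 2 1, ϖ * a 2 0 * ϖ; 0, 1, a 1 0 * ϖ; 0,0,1] := by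
      have ha₁eq := lower_shape σ ha₁N
      have ht₁eq' : t₁ = !![x₁,0,0;0,y₁,0;0,0,(σ x₁)⁻¹] := by rw [ht₁eq, diag3_eq]
      rw [← ha₁eq, ← ht₁eq', ← hb₁eq, ← hdec1, hPjP, hPbP, hPtP, hPaP]
    exact ldu_uniq3 hx₁ hy₁0 hmat
  have ht₁PtP : t₁ = adiag3 (1:F) 1 1 * t * adiag3 (1:F) 1 1 := by
    rw [ht₁eq, diag3_eq, hkey.2.2, hkey.1, hkey.2.1, hteq, diag3_eq]
    simp [adiag3, Matrix.mul_fin_three]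
  -- lambda computations
  have hbt : b * t ∈ J := hJmul b hbJ t htJ
  have lamb : lam b = 1 := htrN b ⟨hbJ, xb, yb, hbrel, hbeq⟩
  have lama : lam a = 1 := htrNbar a ⟨haJ, haN⟩
  have lamj : lam j = lam t := by
    rw [hjdec, hmul _ hbt _ haJ, hmul _ hbJ _ htJ, lamb, lama, one_mul, mul_one]
  have ha₁t₁ : a₁ * t₁ ∈ J := hJmul a₁ ha₁J t₁ ht₁J
  have lamb₁ : lam b₁ = 1 := htrN b₁ ⟨hb₁J, xb₁, yb₁, hb₁rel, hb₁eq⟩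
  have lama₁ : lam a₁ = 1 := htrNbar a₁ ⟨ha₁J, ha₁N⟩
  have lamPjP : lam (P * j * P) = lam t₁ := by
    rw [hdec1, hmul _ ha₁t₁ _ hb₁J, hmul _ ha₁J _ ht₁J, lamb₁, lama₁, one_mul, mul_one]
  have hwxtJ : adiag3 (1:F) 1 1 * t * adiag3 (1:F) 1 1 ∈ J := by
    rw [← ht₁PtP]; exact ht₁J
  have lamt : lam t = lam t₁ := by
    rw [hwx t htJ hwxtJ, ← ht₁PtP]
  rw [lamj, lamPjP, lamt]
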